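/- Let G be a group containing a subgroup H of finite index whose commutator subgroup [H,H] is finite (i.e. G is virtually finite-by-abelian). Then the FC-centre Z̃(G) = {g ∈ G : the centralizer C_G(g) has finite index in G} is a characteristic subgroup of finite index in G whose commutator subgroup [Z̃(G), Z̃(G)] is finite. In particular, G has a characteristic finite-by-abelian subgroup of finite index. -/

import Mathlib

open Subgroup

section Aux
variable {G : Type*} [Group G]

lemma aux_index_centralizer (g : G) :
    (Subgroup.centralizer {g}).index = (conjugatesOf g).ncard := by
  rw [Subgroup.centralizer_eq_comap_stabilizer]
  refine (Subgroup.index_comap_of_surjective (H := MulAction.stabilizer (ConjAct G) g)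
    (f := (ConjAct.toConjAct : G ≃* ConjAct G).toMonoidHom) (MulEquiv.surjective _)).trans ?_
  rw [MulAction.index_stabilizer]
  congr 1
  ext h
  rw [ConjAct.mem_orbit_conjAct]
  exact isConj_comm

lemma aux_fc_iff (g : G) :
    (Subgroup.centralizer {g}).FiniteIndex ↔ (conjugatesOf g).Finite := by
  constructor
  · intro h
    by_contra hinf
    exact h.index_ne_zero (by rw [aux_index_centralizer]; exact Set.Infinite.ncard hinf)
  · intro hfin
    exact ⟨by
      rw [aux_index_centralizer]
      exact ((Set.ncard_pos hfin).mpr ⟨g, mem_conjugatesOf_self⟩).ne'⟩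

lemma aux_centralizer_comap {G' : Type*} [Group G'] (φ : G ≃* G') (g : G) :
    Subgroup.comap φ.toMonoidHom (Subgroup.centralizer {φ g}) = Subgroup.centralizer {g} := by
  ext x
  simp only [Subgroup.mem_comap, Subgroup.mem_centralizer_singleton_iff, MulEquiv.coe_toMonoidHom]
  rw [← map_mul, ← map_mul]
  exact ⟨fun h => φ.injective h, fun h => by rw [h]⟩

lemma aux_index_eq {G' : Type*} [Group G'] (φ : G ≃* G') (g : G) :
    (Subgroup.centralizer {φ g}).index = (Subgroup.centralizer ({g} : Set G)).index := by
  rw [← aux_centralizer_comap φ g, Subgroup.index_comap_of_surjective _ φ.surjective]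

/-- FC-centre as a subgroup. -/
def fcCentre (G : Type*) [Group G] : Subgroup G where
  carrier := {g : G | (Subgroup.centralizer {g}).FiniteIndex}
  one_mem' := by
    have : (⊤ : Subgroup G) ≤ Subgroup.centralizer {1} := fun x _ => by
      rw [Subgroup.mem_centralizer_singleton_iff, mul_one, one_mul]
    exact Subgroup.finiteIndex_of_le this
  mul_mem' {a b} ha hb := by
    haveI : (Subgroup.centralizer {a}).FiniteIndex := ha
    haveI : (Subgroup.centralizer {b}).FiniteIndex := hb
    refine Subgroup.finiteIndex_of_le (H := Subgroup.centralizer {a} ⊓ Subgroup.centralizer {b}) ?_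
    rintro x ⟨hxa, hxb⟩
    have hxa' := Subgroup.mem_centralizer_singleton_iff.mp hxa
    have hxb' := Subgroup.mem_centralizer_singleton_iff.mp hxb
    rw [Subgroup.mem_centralizer_singleton_iff, ← mul_assoc, hxa', mul_assoc, hxb', mul_assoc]
  inv_mem' {a} ha := by
    haveI : (Subgroup.centralizer {a}).FiniteIndex := ha
    refine Subgroup.finiteIndex_of_le (H := Subgroup.centralizer {a}) ?_
    intro x hx
    have hx' := Subgroup.mem_centralizer_singleton_iff.mp hx
    rw [Subgroup.mem_centralizer_singleton_iff]
    calc x * a⁻¹ = a⁻¹ * (a * x) * a⁻¹ := by group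
    _ = a⁻¹ * (x * a) * a⁻¹ := by rw [← hx']
    _ = a⁻¹ * x := by group

lemma mem_fcCentre_iff {g : G} :
    g ∈ fcCentre G ↔ (Subgroup.centralizer ({g} : Set G)).FiniteIndex := Iff.rfl


lemma fcCentre_conj_finite {g : G} (hg : g ∈ fcCentre G) : (conjugatesOf g).Finite :=
  (aux_fc_iff g).mp hg

instance : (fcCentre G).Characteristic := by
  refine Subgroup.characteristic_iff_comap_eq.mpr fun φ => ?_
  ext g
  simp only [Subgroup.mem_comap, mem_fcCentre_iff, MulEquiv.coe_toMonoidHom]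
  constructor
  · intro h
    exact ⟨by rw [← aux_index_eq φ g]; exact h.index_ne_zero⟩
  · intro h
    exact ⟨by rw [aux_index_eq φ g]; exact h.index_ne_zero⟩

end Aux

section Main
open Pointwise
open scoped commutatorElement
variable {G : Type*} [Group G]

lemma subgroup_le_fcCentre (H : Subgroup G) (hH : H.FiniteIndex)
    (hHcomm : ((⁅H, H⁆ : Subgroup G) : Set G).Finite) : H ≤ fcCentre G := by
  intro h hh
  set c : ↥H := ⟨h, hh⟩ with hc
  have hconj : (conjugatesOf c).Finite := by
    have hsub : conjugatesOf c ⊆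
        (Subtype.val) ⁻¹' ((fun w => w * h) '' ((⁅H, H⁆ : Subgroup G) : Set G)) := by
      intro b hb
      obtain ⟨x, hx⟩ := isConj_iff.mp hb
      refine Set.mem_preimage.mpr ⟨⁅(x : G), h⁆, Subgroup.commutator_mem_commutator x.2 hh, ?_⟩
      have : (b : G) = (x : G) * h * (x : G)⁻¹ := by
        rw [← hx]; rfl
      rw [this]; group
    exact ((hHcomm.image _).preimage (Set.injOn_of_injective Subtype.val_injective)).subset hsub
  have hfin : (Subgroup.centralizer {c}).FiniteIndex := (aux_fc_iff c).mpr hconj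
  have key : (Subgroup.centralizer {h}).subgroupOf H = Subgroup.centralizer {c} := by
    ext x
    simp only [Subgroup.mem_subgroupOf, Subgroup.mem_centralizer_singleton_iff, Subtype.ext_iff,
      Submonoid.coe_mul, Subgroup.coe_mul]
    exact Iff.rfl
  have h1 : ((Subgroup.centralizer {h}) ⊓ H).index ≠ 0 := by
    rw [← Subgroup.relIndex_mul_index (inf_le_right : Subgroup.centralizer {h} ⊓ H ≤ H)]
    apply Nat.mul_ne_zero
    · rw [Subgroup.relIndex, Subgroup.inf_subgroupOf_right, key]
      exact hfin.index_ne_zero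
    · exact hH.index_ne_zero
  haveI : ((Subgroup.centralizer {h}) ⊓ H).FiniteIndex := ⟨h1⟩
  exact Subgroup.finiteIndex_of_le (inf_le_left : Subgroup.centralizer {h} ⊓ H ≤ _)

lemma fcCentre_commutator_finite (H : Subgroup G) (hH : H.FiniteIndex)
    (hHcomm : ((⁅H, H⁆ : Subgroup G) : Set G).Finite) :
    ((⁅fcCentre G, fcCentre G⁆ : Subgroup G) : Set G).Finite := by
  haveI := hH
  set F := fcCentre G with hF
  have hle : H ≤ F := subgroup_le_fcCentre H hH hHcomm
  -- F is closed under conjugation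
  have hFnormal : ∀ {z : G}, z ∈ F → ∀ w : G, w * z * w⁻¹ ∈ F := by
    intro z hz w
    have hzi : (Subgroup.centralizer ({z} : Set G)).FiniteIndex := hz
    have heq := aux_index_eq (MulAut.conj w) z
    have : w * z * w⁻¹ = (MulAut.conj w) z := by simp [MulAut.conj_apply]
    rw [mem_fcCentre_iff, this]
    exact ⟨by rw [heq]; exact hzi.index_ne_zero⟩
  have hcommF : ∀ {p q : G}, p ∈ F → q ∈ F → ⁅p, q⁆ ∈ F := by
    intro p q hp hq
    exact F.mul_mem (F.mul_mem (F.mul_mem hp hq) (F.inv_mem hp)) (F.inv_mem hq)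
  -- transversal
  have decomp : ∀ x : G, ∃ u ∈ Set.range (fun q : G ⧸ H => Quotient.out q), ∃ a ∈ H, x = u * a := by
    intro x
    refine ⟨Quotient.out (QuotientGroup.mk x : G ⧸ H), Set.mem_range_self _,
      (Quotient.out (QuotientGroup.mk x : G ⧸ H))⁻¹ * x, ?_, by group⟩
    exact QuotientGroup.eq.mp (Quotient.out_eq' _)
  set T : Set G := Set.range (fun q : G ⧸ H => Quotient.out q) with hTdef
  have hT : T.Finite := Set.finite_range _
  set TF : Set G := T ∩ (F : Set G) with hTF
  have hTFfin : TF.Finite := hT.inter_of_left _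
  -- the conjugation-closure operator
  set conjSet : Set G → Set G := fun S => ⋃ z ∈ S ∩ (F : Set G), conjugatesOf z with hconjSet
  have conjSet_finite : ∀ S : Set G, S.Finite → (conjSet S).Finite := by
    intro S hS
    exact (hS.inter_of_left _).biUnion fun z hz => fcCentre_conj_finite hz.2
  have conjSet_mem : ∀ {S : Set G} {z : G} (w : G), z ∈ S → z ∈ F → w * z * w⁻¹ ∈ conjSet S := by
    intro S z w hzS hzF
    exact Set.mem_biUnion ⟨hzS, hzF⟩ (isConj_iff.mpr ⟨w, rfl⟩)
  have conjSet_subF : ∀ S : Set G, conjSet S ⊆ (F : Set G) := by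
    intro S x hx
    obtain ⟨z, hz, hconj⟩ := Set.mem_iUnion₂.mp hx
    obtain ⟨w, hw⟩ := isConj_iff.mp hconj
    rw [← hw]
    exact hFnormal hz.2 w
  -- building blocks
  set K0 : Set G := ((⁅H, H⁆ : Subgroup G) : Set G) with hK0
  have hK0F : K0 ⊆ (F : Set G) := by
    intro z hz
    exact (Subgroup.commutator_le.mpr fun p hp q hq => hcommF (hle hp) (hle hq)) hz
  set C1 : Set G := ⋃ u ∈ TF, (fun w => u * w) '' conjugatesOf u⁻¹ with hC1
  have hC1fin : C1.Finite :=
    hTFfin.biUnion fun u hu => (fcCentre_conj_finite (F.inv_mem hu.2)).image _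
  have hC1mem : ∀ {u : G}, u ∈ TF → ∀ b : G, ⁅u, b⁆ ∈ C1 := by
    intro u hu b
    refine Set.mem_biUnion hu ⟨b * u⁻¹ * b⁻¹, isConj_iff.mpr ⟨b, rfl⟩, ?_⟩
    group
  have hC1F : C1 ⊆ (F : Set G) := by
    rintro _ ⟨s, ⟨u, rfl⟩, hs⟩
    simp only [Set.mem_iUnion, exists_prop] at hs
    obtain ⟨hu, w, hw, rfl⟩ := hs
    obtain ⟨p, hp⟩ := isConj_iff.mp hw
    rw [← hp]
    exact F.mul_mem hu.2 (hFnormal (F.inv_mem hu.2) p)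
  set C2 : Set G := ⋃ v ∈ TF, (fun w => w * v⁻¹) '' conjugatesOf v with hC2
  have hC2fin : C2.Finite :=
    hTFfin.biUnion fun v hv => (fcCentre_conj_finite hv.2).image _
  have hC2mem : ∀ {v : G}, v ∈ TF → ∀ a : G, ⁅a, v⁆ ∈ C2 := by
    intro v hv a
    refine Set.mem_biUnion hv ⟨a * v * a⁻¹, isConj_iff.mpr ⟨a, rfl⟩, ?_⟩
    group
  set E : Set G := Set.image2 (fun u v => ⁅u, v⁆) TF TF with hE
  have hEfin : E.Finite := hTFfin.image2 _ hTFfin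
  -- the master finite set
  set Ω : Set G := (conjSet C2 * E) * conjSet (conjSet K0 * C1) with hΩdef
  have hΩfin : Ω.Finite :=
    ((conjSet_finite _ hC2fin).mul hEfin).mul
      (conjSet_finite _ ((conjSet_finite _ hHcomm).mul hC1fin))
  -- main claim
  have claim : ∀ x ∈ F, ∀ y ∈ F, ⁅x, y⁆ ∈ Ω := by
    intro x hx y hy
    obtain ⟨u, huT, a, haH, rfl⟩ := decomp x
    obtain ⟨v, hvT, b, hbH, rfl⟩ := decomp y
    have huF : u ∈ F := by
      have := F.mul_mem hx (F.inv_mem (hle haH))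
      simpa using this
    have hvF : v ∈ F := by
      have := F.mul_mem hy (F.inv_mem (hle hbH))
      simpa using this
    have huTF : u ∈ TF := ⟨huT, huF⟩
    have hvTF : v ∈ TF := ⟨hvT, hvF⟩
    have h1 : ⁅u * a, v⁆ ∈ conjSet C2 * E := by
      have e1 : ⁅u * a, v⁆ = (u * ⁅a, v⁆ * u⁻¹) * ⁅u, v⁆ := by group
      rw [e1]
      exact Set.mul_mem_mul (conjSet_mem u (hC2mem hvTF a) (hcommF (hle haH) hvF))
        (Set.mem_image2_of_mem huTF hvTF)
    have h2 : ⁅u * a, b⁆ ∈ conjSet K0 * C1 := by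
      have e2 : ⁅u * a, b⁆ = (u * ⁅a, b⁆ * u⁻¹) * ⁅u, b⁆ := by group
      rw [e2]
      exact Set.mul_mem_mul
        (conjSet_mem u (Subgroup.commutator_mem_commutator haH hbH)
          (hcommF (hle haH) (hle hbH)))
        (hC1mem huTF b)
    have h3 : v * ⁅u * a, b⁆ * v⁻¹ ∈ conjSet (conjSet K0 * C1) :=
      conjSet_mem v h2 (hcommF hx (hle hbH))
    have e0 : ⁅u * a, v * b⁆ = ⁅u * a, v⁆ * (v * ⁅u * a, b⁆ * v⁻¹) := by group
    rw [e0]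
    exact Set.mul_mem_mul h1 h3
  -- commutatorSet of F is finite
  have hcsF : (commutatorSet ↥F).Finite := by
    refine Set.Finite.of_finite_image (hΩfin.subset ?_)
      (Set.injOn_of_injective Subtype.val_injective)
    rintro _ ⟨c, ⟨p, q, rfl⟩, rfl⟩
    have : ((⁅p, q⁆ : ↥F) : G) = ⁅(p : G), (q : G)⁆ := rfl
    rw [this]
    exact claim p p.2 q q.2
  haveI : Finite (commutatorSet ↥F) := hcsF.to_subtype
  haveI : Finite (_root_.commutator ↥F) := inferInstance
  have hmap : (⁅F, F⁆ : Subgroup G) = Subgroup.map F.subtype (_root_.commutator ↥F) := by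
    rw [commutator_def, Subgroup.map_commutator, ← MonoidHom.range_eq_map, Subgroup.range_subtype]
  rw [hmap, Subgroup.coe_map]
  exact (Set.toFinite _).image _

end Main

/-- if a group `G` has a finite-index subgroup `H` with finite commutator
subgroup `⁅H,H⁆` (i.e. `G` is virtually finite-by-abelian), then the FC-centre
`Z̃(G) = {g : C_G(g) has finite index}` is a characteristic subgroup of finite index in `G`
whose commutator subgroup is finite.  In particular, `G` has a characteristic
finite-by-abelian subgroup of finite index. -/
theorem fcCentre_characteristic_finiteIndex_finiteByAbelian
    {G : Type*} [Group G] (H : Subgroup G) (hH : H.FiniteIndex)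
    (hHcomm : ((⁅H, H⁆ : Subgroup G) : Set G).Finite) :
    ∃ S : Subgroup G,
      (S : Set G) = {g : G | (Subgroup.centralizer {g}).FiniteIndex} ∧
      S.Characteristic ∧ S.FiniteIndex ∧
      ((⁅S, S⁆ : Subgroup G) : Set G).Finite := by
  haveI := hH
  refine ⟨fcCentre G, rfl, inferInstance,
    Subgroup.finiteIndex_of_le (subgroup_le_fcCentre H hH hHcomm),
    fcCentre_commutator_finite H hH hHcomm⟩
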